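/- Let X be a real-valued random variable with law P, an atomless (continuous) distribution on ℝ with cumulative distribution function F. Then the random variable 2·Z, where Z = 2 F(X)(1 − F(X)) is the simplicial depth random variable, is distributed as a Beta(1, 1/2) distribution on [0,1]. -/

import Mathlib

open MeasureTheory Set

namespace SimplicialDepthAux

open ProbabilityTheory Filter

lemma my_cdf_continuous (P : Measure ℝ) [IsProbabilityMeasure P] [NullSingletonClass P] :
    Continuous (cdf P) := by
  rw [continuous_iff_continuousAt]
  intro x
  rw [(monotone_cdf P).continuousAt_iff_leftLim_eq_rightLim]
  have hr : Function.rightLim (cdf P) x = cdf P x :=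
    (monotone_cdf P).continuousWithinAt_Ioi_iff_rightLim_eq.1
      (((cdf P).right_continuous x).mono Ioi_subset_Ici_self)
  have hsing : P {x} = 0 := measure_singleton x
  have h0 : (cdf P).measure {x} = ENNReal.ofReal (cdf P x - Function.leftLim (cdf P) x) :=
    StieltjesFunction.measure_singleton _ x
  rw [measure_cdf P, hsing] at h0
  have hle : Function.leftLim (cdf P) x ≤ cdf P x := (monotone_cdf P).leftLim_le le_rfl
  have : cdf P x - Function.leftLim (cdf P) x ≤ 0 := by
    by_contra h
    push_neg at h
    rw [eq_comm, ENNReal.ofReal_eq_zero] at h0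
    linarith
  have hl : Function.leftLim (cdf P) x = cdf P x := le_antisymm hle (by linarith)
  rw [hl, hr]

lemma measure_cdf_le (P : Measure ℝ) [IsProbabilityMeasure P] [NullSingletonClass P]
    {a : ℝ} (ha : 0 ≤ a) (ha1 : a < 1) :
    P {x | cdf P x ≤ a} = ENNReal.ofReal a := by
  have hc := my_cdf_continuous P
  set S := {x | cdf P x ≤ a} with hS
  have hScl : IsClosed S := isClosed_Iic.preimage hc
  rcases eq_empty_or_nonempty S with he | hne
  · have ha0 : a = 0 := by
      by_contra h
      have hapos : 0 < a := lt_of_le_of_ne ha (Ne.symm h)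
      have hev : ∀ᶠ x in atBot, cdf P x < a :=
        (tendsto_cdf_atBot P).eventually (eventually_lt_nhds hapos)
      obtain ⟨x, hx⟩ := hev.exists
      have hmem : x ∈ S := hx.le
      rw [he] at hmem
      exact hmem
    simp [he, ha0]
  · have hub : ∀ᶠ x in atTop, a < cdf P x :=
      (tendsto_cdf_atTop P).eventually (eventually_gt_nhds ha1)
    obtain ⟨x₀, hx₀⟩ := hub.exists_forall_of_atTop
    have hbdd : BddAbove S := by
      refine ⟨x₀, fun x hx => ?_⟩
      by_contra h
      push_neg at h
      exact absurd (hx : cdf P x ≤ a) (not_le.2 (hx₀ x h.le))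
    set c := sSup S with hc'
    have hcS : c ∈ S := hScl.csSup_mem hne hbdd
    have hSeq : S = Iic c := by
      ext x
      constructor
      · intro hx; exact le_csSup hbdd hx
      · intro hx; exact le_trans (monotone_cdf P hx) hcS
    have hca : cdf P c = a := by
      refine le_antisymm hcS ?_
      by_contra h
      push_neg at h
      have : ∀ᶠ y in nhdsWithin c (Ioi c), cdf P y < a :=
        ((hc.tendsto c).mono_left nhdsWithin_le_nhds).eventually (eventually_lt_nhds h)
      obtain ⟨y, hy1, hy2⟩ := (this.and self_mem_nhdsWithin).exists
      exact absurd (le_csSup hbdd (hy1.le : y ∈ S)) (not_le.2 hy2)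
    rw [hSeq, ← ofReal_cdf P c, hca]

lemma measure_le_cdf (P : Measure ℝ) [IsProbabilityMeasure P] [NullSingletonClass P]
    {a : ℝ} (ha : 0 < a) (ha1 : a ≤ 1) :
    P {x | a ≤ cdf P x} = ENNReal.ofReal (1 - a) := by
  have hc := my_cdf_continuous P
  set S := {x | a ≤ cdf P x} with hS
  have hScl : IsClosed S := isClosed_Ici.preimage hc
  rcases eq_empty_or_nonempty S with he | hne
  · have ha0 : a = 1 := by
      by_contra h
      have halt : a < 1 := lt_of_le_of_ne ha1 h
      have hev : ∀ᶠ x in atTop, a < cdf P x :=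
        (tendsto_cdf_atTop P).eventually (eventually_gt_nhds halt)
      obtain ⟨x, hx⟩ := hev.exists
      have hmem : x ∈ S := hx.le
      rw [he] at hmem
      exact hmem
    simp [he, ha0]
  · have hlb : ∀ᶠ x in atBot, cdf P x < a :=
      (tendsto_cdf_atBot P).eventually (eventually_lt_nhds ha)
    obtain ⟨x₀, hx₀⟩ := hlb.exists_forall_of_atBot
    have hbdd : BddBelow S := by
      refine ⟨x₀, fun x hx => ?_⟩
      by_contra h
      push_neg at h
      exact absurd (hx : a ≤ cdf P x) (not_le.2 (hx₀ x h.le))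
    set d := sInf S with hd'
    have hdS : d ∈ S := hScl.csInf_mem hne hbdd
    have hSeq : S = Ici d := by
      ext x
      constructor
      · intro hx; exact csInf_le hbdd hx
      · intro hx; exact le_trans hdS (monotone_cdf P hx)
    have hda : cdf P d = a := by
      refine le_antisymm ?_ hdS
      by_contra h
      push_neg at h
      have : ∀ᶠ y in nhdsWithin d (Iio d), a < cdf P y :=
        ((hc.tendsto d).mono_left nhdsWithin_le_nhds).eventually (eventually_gt_nhds h)
      obtain ⟨y, hy1, hy2⟩ := (this.and self_mem_nhdsWithin).exists
      exact absurd (csInf_le hbdd (hy1.le : y ∈ S)) (not_le.2 hy2)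
    have hIio : P (Iio d) = ENNReal.ofReal a := by
      rw [measure_congr (Iio_ae_eq_Iic (μ := P) (a := d)), ← ofReal_cdf P d, hda]
    rw [hSeq, ← compl_Iio, measure_compl measurableSet_Iio (measure_ne_top P _), hIio,
      measure_univ, ← ENNReal.ofReal_one, ← ENNReal.ofReal_sub _ ha.le]

noncomputable def dens : ℝ → ENNReal := fun t => ENNReal.ofReal
  (indicator (Icc (0 : ℝ) 1) (fun t => (1 / 2) * (1 - t) ^ (-(1 / 2 : ℝ))) t)

lemma dens_eq (t : ℝ) : dens t =
    indicator (Icc (0 : ℝ) 1) (fun u => ENNReal.ofReal ((1 / 2) * (1 - u) ^ (-(1 / 2 : ℝ)))) t := by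
  by_cases h : t ∈ Icc (0:ℝ) 1 <;> simp [dens, h]

lemma rhs_neg {t : ℝ} (ht : t < 0) : (volume.withDensity dens) (Iic t) = 0 := by
  rw [withDensity_apply _ measurableSet_Iic]
  have : ∀ u ∈ Iic t, dens u = 0 := by
    intro u hu
    have : u ∉ Icc (0:ℝ) 1 := by
      simp only [mem_Icc, not_and_or]
      left; push_neg
      exact lt_of_le_of_lt (mem_Iic.1 hu) ht
    simp [dens, this]
  rw [setLIntegral_congr_fun measurableSet_Iic (show EqOn dens (fun _ => 0) (Iic t) from fun u hu => this u hu)]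
  simp

lemma integrable_dens_aux {m : ℝ} (hm0 : 0 ≤ m) :
    IntegrableOn (fun u : ℝ => (1 / 2) * (1 - u) ^ (-(1 / 2 : ℝ))) (Icc 0 m) := by
  have h1 : IntervalIntegrable (fun x : ℝ => x ^ (-(1/2) : ℝ)) volume (1 - m) 1 :=
    intervalIntegral.intervalIntegrable_rpow' (by norm_num)
  have h2 := (h1.comp_sub_left 1).const_mul (1/2 : ℝ)
  have h3 : IntervalIntegrable (fun u : ℝ => (1 / 2) * (1 - u) ^ (-(1 / 2 : ℝ))) volume 0 m := by
    convert h2.symm using 2 <;> ring_nf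
  exact (intervalIntegrable_iff_integrableOn_Icc_of_le hm0).1 h3

lemma integral_dens_aux {m : ℝ} (hm0 : 0 ≤ m) :
    ∫ u in Icc (0:ℝ) m, (1 / 2) * (1 - u) ^ (-(1 / 2 : ℝ)) = 1 - Real.sqrt (1 - m) := by
  rw [integral_Icc_eq_integral_Ioc, ← intervalIntegral.integral_of_le hm0,
    intervalIntegral.integral_const_mul]
  have := intervalIntegral.integral_comp_sub_left (fun x : ℝ => x ^ (-(1/2) : ℝ)) 1 (a := 0) (b := m)
  simp only [sub_zero] at this
  rw [this, integral_rpow (Or.inl (by norm_num))]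
  rw [Real.sqrt_eq_rpow]
  norm_num
  ring

lemma rhs_nonneg {t : ℝ} (ht : 0 ≤ t) :
    (volume.withDensity dens) (Iic t) = ENNReal.ofReal (1 - Real.sqrt (1 - min t 1)) := by
  set m := min t 1 with hm
  have hm0 : 0 ≤ m := le_min ht zero_le_one
  have hm1 : m ≤ 1 := min_le_right _ _
  rw [withDensity_apply _ measurableSet_Iic]
  simp only [dens_eq]
  rw [lintegral_indicator measurableSet_Icc, Measure.restrict_restrict measurableSet_Icc]
  have hset : Icc (0:ℝ) 1 ∩ Iic t = Icc 0 m := by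
    ext u
    simp only [mem_inter_iff, mem_Icc, mem_Iic, hm, le_min_iff]
    constructor
    · rintro ⟨⟨h1, h2⟩, h3⟩; exact ⟨h1, h3, h2⟩
    · rintro ⟨h1, h2, h3⟩; exact ⟨⟨h1, h3⟩, h2⟩
  rw [hset, ← ofReal_integral_eq_lintegral_ofReal (integrable_dens_aux hm0)]
  · rw [integral_dens_aux hm0]
  · filter_upwards [ae_restrict_mem measurableSet_Icc] with u hu
    have : (0:ℝ) ≤ 1 - u := by
      have := hu.2; linarith [hm1]
    positivity

end SimplicialDepthAux

/-- For `X ~ P` atomless on `ℝ` with CDF `F`, the random variable `2 Z`, where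
`Z = 2 F(X) (1 - F(X))` is the simplicial depth random variable, is distributed as a
`Beta(1, 1/2)` distribution on `[0, 1]`, i.e. its law has density `(1/2) (1 - t)^(-1/2)`
on `[0, 1]` with respect to Lebesgue measure. -/
theorem two_simplicial_depth_beta
    (P : Measure ℝ) [IsProbabilityMeasure P] [NullSingletonClass P]
    (F : ℝ → ℝ) (hF : ∀ x, F x = (P (Iic x)).toReal) :
    Measure.map (fun x => 2 * (2 * F x * (1 - F x))) P =
      volume.withDensity (fun t => ENNReal.ofReal
        (indicator (Icc (0 : ℝ) 1) (fun t => (1 / 2) * (1 - t) ^ (-(1 / 2 : ℝ))) t)) := by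
  open ProbabilityTheory SimplicialDepthAux in
  have hFc : F = fun x => cdf P x := funext fun x => by rw [hF, ProbabilityTheory.cdf_eq_real, measureReal_def]
  have hc : Continuous (ProbabilityTheory.cdf P) := SimplicialDepthAux.my_cdf_continuous P
  have hg : Measurable (fun x => 2 * (2 * F x * (1 - F x))) := by
    rw [hFc]
    exact (continuous_const.mul ((continuous_const.mul hc).mul (continuous_const.sub hc))).measurable
  show _ = volume.withDensity SimplicialDepthAux.dens
  haveI : IsProbabilityMeasure (Measure.map (fun x => 2 * (2 * F x * (1 - F x))) P) :=
    Measure.isProbabilityMeasure_map hg.aemeasurable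
  refine Measure.ext_of_Iic _ _ (fun t => ?_)
  rw [Measure.map_apply hg measurableSet_Iic]
  have hu0 : ∀ x, 0 ≤ ProbabilityTheory.cdf P x := ProbabilityTheory.cdf_nonneg P
  have hu1 : ∀ x, ProbabilityTheory.cdf P x ≤ 1 := ProbabilityTheory.cdf_le_one P
  rcases lt_or_ge t 0 with ht | ht
  · rw [SimplicialDepthAux.rhs_neg ht]
    convert measure_empty (μ := P)
    ext x
    simp only [mem_preimage, mem_Iic, mem_empty_iff_false, iff_false, not_le, hFc]
    nlinarith [hu0 x, hu1 x]
  rcases le_or_gt 1 t with ht1 | ht1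
  · rw [SimplicialDepthAux.rhs_nonneg ht, min_eq_right ht1]
    simp only [sub_self, Real.sqrt_zero, sub_zero, ENNReal.ofReal_one]
    have : (fun x => 2 * (2 * F x * (1 - F x))) ⁻¹' Iic t = univ := by
      ext x
      simp only [mem_preimage, mem_Iic, mem_univ, iff_true, hFc]
      nlinarith [hu0 x, hu1 x, sq_nonneg (2 * ProbabilityTheory.cdf P x - 1)]
    rw [this, measure_univ]
  · -- 0 ≤ t < 1
    set s := Real.sqrt (1 - t) with hs
    have hs0 : 0 < s := Real.sqrt_pos.2 (by linarith)
    have hs1 : s ≤ 1 := Real.sqrt_le_one.2 (by linarith)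
    have hs2 : s ^ 2 = 1 - t := Real.sq_sqrt (by linarith)
    have hpre : (fun x => 2 * (2 * F x * (1 - F x))) ⁻¹' Iic t =
        {x | ProbabilityTheory.cdf P x ≤ (1 - s) / 2} ∪
          {x | (1 + s) / 2 ≤ ProbabilityTheory.cdf P x} := by
      ext x
      simp only [mem_preimage, mem_Iic, mem_union, mem_setOf_eq, hFc]
      set u := ProbabilityTheory.cdf P x
      constructor
      · intro h
        by_contra hcon
        push_neg at hcon
        obtain ⟨h1, h2⟩ := hcon
        nlinarith [mul_pos (show (0:ℝ) < s - (2*u - 1) by linarith)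
          (show (0:ℝ) < s + (2*u - 1) by linarith)]
      · rintro (h | h)
        · nlinarith [mul_self_le_mul_self hs0.le (show s ≤ 1 - 2*u by linarith)]
        · nlinarith [mul_self_le_mul_self hs0.le (show s ≤ 2*u - 1 by linarith)]
    have hdisj : Disjoint {x | ProbabilityTheory.cdf P x ≤ (1 - s) / 2}
        {x | (1 + s) / 2 ≤ ProbabilityTheory.cdf P x} := by
      rw [Set.disjoint_left]
      intro x hx1 hx2
      simp only [mem_setOf_eq] at hx1 hx2
      linarith
    have hmeas : MeasurableSet {x | (1 + s) / 2 ≤ ProbabilityTheory.cdf P x} :=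
      hc.measurable measurableSet_Ici
    rw [hpre, measure_union hdisj hmeas,
      SimplicialDepthAux.measure_cdf_le P (by linarith) (by linarith),
      SimplicialDepthAux.measure_le_cdf P (by linarith) (by linarith),
      SimplicialDepthAux.rhs_nonneg ht, min_eq_left ht1.le,
      ← ENNReal.ofReal_add (by linarith) (by linarith), ← hs]
    ring_nf
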